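/- Let n ≥ 1 be a natural number, r > 0, s ∈ ℝ, let A be an n×n real matrix with det A ≠ 0, and let w ∈ ℝⁿ. Define ν(p) = n(n+5)/2 + tanh(p)·n(n+3)/2 + 1, M(ν) = A·Aᵀ + (r + ν)⁻¹ · (w wᵀ) (where w wᵀ is the outer product), and H(p) = log(Real.Gamma((ν(p) − n + 1)/2)) − log(Real.Gamma((ν(p) + 1)/2)) + (n/2)·log(r + ν(p)) − ν(p)·s + ((ν(p) + 1)/2)·log(det M(ν(p))). Then H is differentiable on ℝ and its derivative tends to 0 as p → −∞. -/

import Mathlib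

open Real Filter Matrix

/-- Degrees-of-freedom parameter produced via the tanh activation. -/
noncomputable def nuParam (n : ℕ) (p : ℝ) : ℝ :=
  (n : ℝ) * (n + 5) / 2 + Real.tanh p * ((n : ℝ) * (n + 3) / 2) + 1

/- ### tanh facts -/

lemma tanh_eq_exp_aux (p : ℝ) :
    Real.tanh p = (Real.exp p * Real.exp p - 1) / (Real.exp p * Real.exp p + 1) := by
  have h0 : Real.exp p ≠ 0 := (Real.exp_pos p).ne'
  have h1 : Real.exp p + Real.exp (-p) ≠ 0 := by positivity
  have h2 : Real.exp p * Real.exp p + 1 ≠ 0 := by positivity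
  rw [Real.tanh_eq_sinh_div_cosh, Real.sinh_eq, Real.cosh_eq, Real.exp_neg] at *
  field_simp at *

lemma neg_one_lt_tanh (p : ℝ) : -1 < Real.tanh p := by
  rw [tanh_eq_exp_aux]
  have h : (0:ℝ) < Real.exp p * Real.exp p := by positivity
  rw [lt_div_iff₀ (by linarith)]
  nlinarith

lemma tendsto_tanh_atBot : Tendsto Real.tanh atBot (nhds (-1)) := by
  have h1 : Tendsto (fun p : ℝ => Real.exp p * Real.exp p) atBot (nhds 0) := by
    simpa using Real.tendsto_exp_atBot.mul Real.tendsto_exp_atBot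
  have h2 : Tendsto (fun p : ℝ =>
      (Real.exp p * Real.exp p - 1) / (Real.exp p * Real.exp p + 1)) atBot
      (nhds ((0 - 1) / (0 + 1))) :=
    (h1.sub tendsto_const_nhds).div (h1.add tendsto_const_nhds) (by norm_num)
  have h3 : ((0:ℝ) - 1) / (0 + 1) = -1 := by norm_num
  rw [h3] at h2
  exact h2.congr fun p => (tanh_eq_exp_aux p).symm

lemma hasDerivAt_tanh_aux (p : ℝ) :
    HasDerivAt Real.tanh ((Real.cosh p)⁻¹ * (Real.cosh p)⁻¹) p := by
  have h := (Real.hasDerivAt_sinh p).div (Real.hasDerivAt_cosh p) (Real.cosh_pos p).ne'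
  have heq : Real.tanh = fun x => Real.sinh x / Real.cosh x :=
    funext fun x => Real.tanh_eq_sinh_div_cosh x
  rw [heq]
  refine h.congr_deriv ?_
  have h1 : Real.cosh p ^ 2 - Real.sinh p ^ 2 = 1 := Real.cosh_sq_sub_sinh_sq p
  have h2 : Real.cosh p ≠ 0 := (Real.cosh_pos p).ne'
  have h3 : Real.cosh p * Real.cosh p - Real.sinh p * Real.sinh p = 1 := by nlinarith
  rw [h3, one_div, sq, mul_inv]

lemma tendsto_cosh_atBot_aux : Tendsto Real.cosh atBot atTop := by
  have hb : ∀ p : ℝ, Real.exp (-p) / 2 ≤ Real.cosh p := by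
    intro p
    rw [Real.cosh_eq]
    have := Real.exp_pos p
    linarith
  have hf : Tendsto (fun p : ℝ => Real.exp (-p) / 2) atBot atTop := by
    apply Tendsto.atTop_div_const (by norm_num)
    exact Real.tendsto_exp_atTop.comp tendsto_neg_atBot_atTop
  exact tendsto_atTop_mono hb hf

/- ### Gamma smoothness -/

lemma contDiffAt_realGamma {x : ℝ} (hx : 0 < x) : ContDiffAt ℝ 1 Real.Gamma x := by
  have hopen : IsOpen {z : ℂ | 0 < z.re} := isOpen_lt continuous_const Complex.continuous_re
  have hd : DifferentiableOn ℂ Complex.Gamma {z : ℂ | 0 < z.re} := by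
    intro z hz
    refine (Complex.differentiableAt_Gamma z fun m => ?_).differentiableWithinAt
    intro h
    simp only [Set.mem_setOf_eq] at hz
    rw [h] at hz
    simp only [Complex.neg_re, Complex.natCast_re] at hz
    have : (0:ℝ) ≤ (m:ℝ) := Nat.cast_nonneg m
    linarith
  have han : AnalyticAt ℂ Complex.Gamma (x : ℂ) :=
    hd.analyticAt (hopen.mem_nhds (by simpa using hx))
  have h2 : ContDiffAt ℝ 1 Complex.Gamma ((x : ℝ) : ℂ) :=
    (han.contDiffAt (n := 1)).restrict_scalars ℝ
  have h3 : ContDiffAt ℝ 1 (fun y : ℝ => (Complex.Gamma (y : ℂ)).re) x :=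
    (Complex.reCLM.contDiff (n := 1)).contDiffAt.comp x
      (h2.comp x (Complex.ofRealCLM.contDiff (n := 1)).contDiffAt)
  have heq : Real.Gamma = fun y : ℝ => (Complex.Gamma (y : ℂ)).re := by
    funext y
    rw [Complex.Gamma_ofReal, Complex.ofReal_re]
  rw [heq]
  exact h3

/- ### determinant smoothness -/

lemma contDiffOn_det_aux {m : ℕ} (B C : Matrix (Fin m) (Fin m) ℝ) (r : ℝ) :
    ContDiffOn ℝ 1 (fun ν : ℝ => (B + (r + ν)⁻¹ • C).det) {ν : ℝ | r + ν ≠ 0} := by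
  have heq : (fun ν : ℝ => (B + (r + ν)⁻¹ • C).det)
      = fun ν => ∑ σ : Equiv.Perm (Fin m),
          ((Equiv.Perm.sign σ : ℤ) : ℝ) * ∏ i, (B (σ i) i + (r + ν)⁻¹ * C (σ i) i) := by
    funext ν
    simp [Matrix.det_apply', Matrix.add_apply, Matrix.smul_apply, smul_eq_mul]
  rw [heq]
  apply ContDiffOn.sum
  intro σ _
  apply ContDiffOn.mul contDiffOn_const
  apply contDiffOn_prod
  intro i _
  refine contDiffOn_const.add (ContDiffOn.mul ?_ contDiffOn_const)
  exact (contDiffOn_const.add contDiffOn_id).inv fun x hx => hx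

/- ### positive definiteness -/

lemma posDef_M_aux {m : ℕ} (A : Matrix (Fin m) (Fin m) ℝ) (hA : A.det ≠ 0) (w : Fin m → ℝ)
    {x : ℝ} (hx : 0 ≤ x) : (A * Aᵀ + x • Matrix.vecMulVec w w).PosDef := by
  have hAAT : (A * Aᵀ).PosDef := by
    have hinj : Function.Injective (Aᵀ.mulVec) := by
      rw [Matrix.mulVec_injective_iff_isUnit]
      exact (Matrix.isUnit_iff_isUnit_det _).2
        (isUnit_iff_ne_zero.2 (by rwa [Matrix.det_transpose]))
    refine Matrix.posDef_iff_dotProduct_mulVec.2 ⟨?_, ?_⟩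
    · have h := Matrix.isHermitian_mul_conjTranspose_self A
      rwa [Matrix.conjTranspose_eq_transpose_of_trivial] at h
    · intro v hv
      have hy : Aᵀ *ᵥ v ≠ 0 := fun h0 => hv (hinj (by simpa using h0))
      have h1 : star v ⬝ᵥ (A * Aᵀ) *ᵥ v = (Aᵀ *ᵥ v) ⬝ᵥ (Aᵀ *ᵥ v) := by
        rw [star_trivial, ← Matrix.mulVec_mulVec, Matrix.dotProduct_mulVec,
          ← Matrix.mulVec_transpose]
      rw [h1]
      simpa using Matrix.dotProduct_star_self_pos_iff.mpr hy
  have hPSD : (x • Matrix.vecMulVec w w).PosSemidef := by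
    have h1 : (Matrix.vecMulVec w w).PosSemidef := by
      have h := Matrix.posSemidef_conjTranspose_mul_self (Matrix.replicateRow Unit w)
      have heq : (Matrix.replicateRow Unit w)ᴴ * Matrix.replicateRow Unit w = Matrix.vecMulVec w w := by
        rw [Matrix.conjTranspose_replicateRow, Matrix.vecMulVec_eq Unit]
        simp
      rwa [heq] at h
    refine Matrix.posSemidef_iff_dotProduct_mulVec.2 ⟨?_, ?_⟩
    · unfold Matrix.IsHermitian
      ext i j
      have := congrFun (congrFun h1.1 i) j
      simp only [Matrix.conjTranspose_apply, Matrix.smul_apply, smul_eq_mul, star_trivial] at *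
      rw [this]
    · intro v
      have h2 : star v ⬝ᵥ (x • Matrix.vecMulVec w w) *ᵥ v
          = x * (star v ⬝ᵥ (Matrix.vecMulVec w w) *ᵥ v) := by
        rw [Matrix.smul_mulVec, dotProduct_smul, smul_eq_mul]
      rw [h2]
      exact mul_nonneg hx ((Matrix.posSemidef_iff_dotProduct_mulVec.1 h1).2 v)
  exact hAAT.add_posSemidef hPSD

theorem stmt_8 (n : ℕ) (hn : 1 ≤ n) (r s : ℝ) (hr : 0 < r)
    (A : Matrix (Fin n) (Fin n) ℝ) (hA : A.det ≠ 0) (w : Fin n → ℝ) :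
    Differentiable ℝ (fun p : ℝ =>
      Real.log (Real.Gamma ((nuParam n p - n + 1) / 2))
        - Real.log (Real.Gamma ((nuParam n p + 1) / 2))
        + ((n : ℝ) / 2) * Real.log (r + nuParam n p)
        - nuParam n p * s
        + ((nuParam n p + 1) / 2) *
            Real.log ((A * Aᵀ + (r + nuParam n p)⁻¹ • Matrix.vecMulVec w w).det))
    ∧ Tendsto
        (deriv (fun p : ℝ =>
          Real.log (Real.Gamma ((nuParam n p - n + 1) / 2))
            - Real.log (Real.Gamma ((nuParam n p + 1) / 2))
            + ((n : ℝ) / 2) * Real.log (r + nuParam n p)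
            - nuParam n p * s
            + ((nuParam n p + 1) / 2) *
                Real.log ((A * Aᵀ + (r + nuParam n p)⁻¹ • Matrix.vecMulVec w w).det)))
        atBot (nhds 0) := by
  have hn1 : (1:ℝ) ≤ (n:ℝ) := by exact_mod_cast hn
  set U : Set ℝ := Set.Ioi ((n:ℝ)) with hU
  have hUopen : IsOpen U := isOpen_Ioi
  -- basic facts about U
  have hUfacts : ∀ x ∈ U, 0 < (x - (n:ℝ) + 1) / 2 ∧ 0 < (x + 1) / 2 ∧ 0 < r + x := by
    intro x hx
    simp only [hU, Set.mem_Ioi] at hx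
    refine ⟨by linarith, by linarith, by linarith⟩
  have hdet_pos : ∀ x ∈ U,
      0 < (A * Aᵀ + (r + x)⁻¹ • Matrix.vecMulVec w w).det := by
    intro x hx
    have hrx : 0 < r + x := (hUfacts x hx).2.2
    exact (posDef_M_aux A hA w (le_of_lt (inv_pos.2 hrx))).det_pos
  -- The function of ν
  set G : ℝ → ℝ := fun ν =>
    Real.log (Real.Gamma ((ν - n + 1) / 2))
      - Real.log (Real.Gamma ((ν + 1) / 2))
      + ((n : ℝ) / 2) * Real.log (r + ν)
      - ν * s
      + ((ν + 1) / 2) *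
          Real.log ((A * Aᵀ + (r + ν)⁻¹ • Matrix.vecMulVec w w).det) with hGdef
  have hG : ContDiffOn ℝ 1 G U := by
    intro x hx
    obtain ⟨ha1, ha2, ha3⟩ := hUfacts x hx
    have haff1 : ContDiffAt ℝ 1 (fun ν : ℝ => (ν - (n:ℝ) + 1) / 2) x :=
      ((contDiffAt_id.sub contDiffAt_const).add contDiffAt_const).div_const 2
    have haff2 : ContDiffAt ℝ 1 (fun ν : ℝ => (ν + 1) / 2) x :=
      (contDiffAt_id.add contDiffAt_const).div_const 2
    have h1 : ContDiffAt ℝ 1 (fun ν : ℝ => Real.log (Real.Gamma ((ν - n + 1) / 2))) x :=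
      (ContDiffAt.comp (g := Real.Gamma) x (contDiffAt_realGamma ha1) haff1).log (Real.Gamma_pos_of_pos ha1).ne'
    have h2 : ContDiffAt ℝ 1 (fun ν : ℝ => Real.log (Real.Gamma ((ν + 1) / 2))) x :=
      (ContDiffAt.comp (g := Real.Gamma) x (contDiffAt_realGamma ha2) haff2).log (Real.Gamma_pos_of_pos ha2).ne'
    have h3 : ContDiffAt ℝ 1 (fun ν : ℝ => ((n : ℝ) / 2) * Real.log (r + ν)) x :=
      contDiffAt_const.mul ((contDiffAt_const.add contDiffAt_id).log ha3.ne')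
    have h4 : ContDiffAt ℝ 1 (fun ν : ℝ => ν * s) x := contDiffAt_id.mul contDiffAt_const
    have hdetC : ContDiffAt ℝ 1
        (fun ν : ℝ => (A * Aᵀ + (r + ν)⁻¹ • Matrix.vecMulVec w w).det) x := by
      have hsub : U ⊆ {ν : ℝ | r + ν ≠ 0} := by
        intro y hy
        exact (hUfacts y hy).2.2.ne'
      exact ((contDiffOn_det_aux (A * Aᵀ) (Matrix.vecMulVec w w) r).mono hsub).contDiffAt
        (hUopen.mem_nhds hx)
    have h5 : ContDiffAt ℝ 1 (fun ν : ℝ => ((ν + 1) / 2) *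
        Real.log ((A * Aᵀ + (r + ν)⁻¹ • Matrix.vecMulVec w w).det)) x :=
      haff2.mul (hdetC.log (hdet_pos x hx).ne')
    exact ((((h1.sub h2).add h3).sub h4).add h5).contDiffWithinAt
  have hGdiff : ∀ x ∈ U, DifferentiableAt ℝ G x := fun x hx =>
    (hG.contDiffAt (hUopen.mem_nhds hx)).differentiableAt one_ne_zero
  have hGderiv_cont : ContinuousOn (deriv G) U :=
    hG.continuousOn_deriv_of_isOpen hUopen le_rfl
  -- membership of nuParam
  have hmem : ∀ p : ℝ, nuParam n p ∈ U := by
    intro p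
    have ht := _root_.neg_one_lt_tanh p
    have hdpos : 0 < (n : ℝ) * (n + 3) / 2 := by nlinarith
    simp only [hU, Set.mem_Ioi, nuParam]
    nlinarith
  have hmem1 : (n:ℝ) + 1 ∈ U := by
    simp only [hU, Set.mem_Ioi]; linarith
  -- derivative of nuParam
  have hνd : ∀ p : ℝ, HasDerivAt (nuParam n)
      (((Real.cosh p)⁻¹ * (Real.cosh p)⁻¹) * ((n : ℝ) * (n + 3) / 2)) p := by
    intro p
    have h := ((hasDerivAt_tanh_aux p).mul_const ((n : ℝ) * (n + 3) / 2)).const_add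
      ((n : ℝ) * (n + 5) / 2)
    have h2 := h.add_const 1
    exact h2
  -- the target function equals G ∘ nuParam
  constructor
  · intro p
    exact (hGdiff _ (hmem p)).comp p (hνd p).differentiableAt
  · have hderiv : ∀ p : ℝ, deriv (fun q : ℝ => G (nuParam n q)) p
        = deriv G (nuParam n p) * (((Real.cosh p)⁻¹ * (Real.cosh p)⁻¹) * ((n : ℝ) * (n + 3) / 2)) := by
      intro p
      have hGd := (hGdiff _ (hmem p)).hasDerivAt
      exact (hGd.comp p (hνd p)).deriv
    have t1 : Tendsto (nuParam n) atBot (nhds ((n:ℝ) + 1)) := by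
      have h := (tendsto_const_nhds (x := (n : ℝ) * (n + 5) / 2) (f := atBot)).add
        ((tendsto_tanh_atBot.mul_const ((n : ℝ) * (n + 3) / 2)).add
          (tendsto_const_nhds (x := (1:ℝ))))
      have heq : (n : ℝ) * (n + 5) / 2 + (-1 * ((n : ℝ) * (n + 3) / 2) + 1) = (n:ℝ) + 1 := by
        ring
      rw [heq] at h
      exact h.congr fun p => by simp [nuParam]; ring
    have t2 : Tendsto (fun p : ℝ => deriv G (nuParam n p)) atBot (nhds (deriv G ((n:ℝ) + 1))) :=
      ((hGderiv_cont.continuousAt (hUopen.mem_nhds hmem1)).tendsto).comp t1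
    have hcoshinv : Tendsto (fun p : ℝ => (Real.cosh p)⁻¹) atBot (nhds 0) :=
      tendsto_cosh_atBot_aux.inv_tendsto_atTop
    have t3 : Tendsto (fun p : ℝ =>
        ((Real.cosh p)⁻¹ * (Real.cosh p)⁻¹) * ((n : ℝ) * (n + 3) / 2)) atBot (nhds 0) := by
      have := (hcoshinv.mul hcoshinv).mul_const ((n : ℝ) * (n + 3) / 2)
      simpa using this
    have tfinal := t2.mul t3
    rw [mul_zero] at tfinal
    exact tfinal.congr fun p => (hderiv p).symm
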